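/- Let Φ₁, …, Φ_N be bare measurement channels on n×n complex matrices and let Φ = Φ_N ∘ ⋯ ∘ Φ₁ be their composition. If ρ is a nonzero n×n complex matrix and λ is a complex number with |λ| = 1 such that Φ(ρ) = λ • ρ, then λ = 1. -/

import Mathlib

open Matrix
open scoped ComplexOrder

open scoped Kronecker

/-- The square root of a positive semidefinite matrix, as `Matrix.PosSemidef.sqrt` was defined in
Mathlib (removed since). -/
noncomputable def Matrix.PosSemidef.sqrt {n 𝕜 : Type*} [Fintype n] [DecidableEq n] [RCLike 𝕜]
    {A : Matrix n n 𝕜} (hA : A.PosSemidef) : Matrix n n 𝕜 :=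
  hA.1.eigenvectorUnitary.1 * diagonal ((↑) ∘ (√·) ∘ hA.1.eigenvalues) *
    (star hA.1.eigenvectorUnitary : Matrix n n 𝕜)

/-- A bare measurement channel: `Φ(ρ) = Σ_α √E_α ρ √E_α` for some POVM `(E_α)`. -/
def IsBareChannel {n : ℕ}
    (Φ : Matrix (Fin n) (Fin n) ℂ → Matrix (Fin n) (Fin n) ℂ) : Prop :=
  ∃ (k : ℕ) (E : Fin k → Matrix (Fin n) (Fin n) ℂ)
    (hE : ∀ α, (E α).PosSemidef),
      (∑ α, E α) = 1 ∧ ∀ ρ, Φ ρ = ∑ α, (hE α).sqrt * ρ * (hE α).sqrt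

set_option linter.unusedSectionVars false

lemma Matrix.PosSemidef.sqrt_mul_self {n 𝕜 : Type*} [Fintype n] [DecidableEq n] [RCLike 𝕜]
    {A : Matrix n n 𝕜} (hA : A.PosSemidef) : hA.sqrt * hA.sqrt = A := by
  conv_rhs => rw [hA.1.spectral_theorem]
  rw [Unitary.conjStarAlgAut_apply]
  unfold Matrix.PosSemidef.sqrt
  set U := hA.1.eigenvectorUnitary
  have hU : (star U : Matrix n n 𝕜) * U.1 = 1 := Unitary.coe_star_mul_self U
  set D : Matrix n n 𝕜 := diagonal ((↑) ∘ (√·) ∘ hA.1.eigenvalues)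
  have hD : D * D = diagonal (RCLike.ofReal ∘ hA.1.eigenvalues) := by
    rw [diagonal_mul_diagonal]
    congr 1
    funext i
    simp only [Function.comp_apply, ← RCLike.ofReal_mul, Real.mul_self_sqrt (hA.eigenvalues_nonneg i)]
  rw [show U.1 * D * (star U : Matrix n n 𝕜) * (U.1 * D * (star U : Matrix n n 𝕜))
      = U.1 * (D * ((star U : Matrix n n 𝕜) * U.1) * D) * (star U : Matrix n n 𝕜) by
    simp only [mul_assoc], hU, mul_one, hD]

lemma Matrix.PosSemidef.posSemidef_sqrt {n 𝕜 : Type*} [Fintype n] [DecidableEq n] [RCLike 𝕜]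
    {A : Matrix n n 𝕜} (hA : A.PosSemidef) : hA.sqrt.PosSemidef := by
  unfold Matrix.PosSemidef.sqrt
  have hD : (diagonal ((↑) ∘ (√·) ∘ hA.1.eigenvalues) : Matrix n n 𝕜).PosSemidef := by
    rw [posSemidef_diagonal_iff]
    intro i
    simp only [Function.comp_apply]
    exact RCLike.ofReal_nonneg.mpr (Real.sqrt_nonneg _)
  have := hD.mul_mul_conjTranspose_same hA.1.eigenvectorUnitary.1
  rwa [← star_eq_conjTranspose] at this

lemma psd_mulVec_eq_zero {m : Type} [Fintype m] [DecidableEq m] (M : Matrix m m ℂ)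
    (hM : M.PosSemidef) (v : m → ℂ) (h : star v ⬝ᵥ (M *ᵥ v) = 0) : M *ᵥ v = 0 := by
  have hS := hM.posSemidef_sqrt
  rw [← hM.sqrt_mul_self, ← mulVec_mulVec] at h ⊢
  have h' : star (hM.sqrt *ᵥ v) ⬝ᵥ (hM.sqrt *ᵥ v) = 0 := by
    rw [star_mulVec, ← dotProduct_mulVec, hS.1.eq]; exact h
  rw [dotProduct_star_self_eq_zero] at h'
  rw [h', mulVec_zero]


/-- vectorization of a matrix -/
def mvec {n : ℕ} (ρ : Matrix (Fin n) (Fin n) ℂ) : Fin n × Fin n → ℂ := fun p => ρ p.1 p.2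

lemma mvec_inj {n : ℕ} : Function.Injective (mvec (n := n)) := by
  intro a b h
  ext i j
  exact congrFun h (i, j)

lemma mvec_smul {n : ℕ} (c : ℂ) (ρ : Matrix (Fin n) (Fin n) ℂ) :
    mvec (c • ρ) = c • mvec ρ := rfl

lemma kron_mulVec {n : ℕ} (A B : Matrix (Fin n) (Fin n) ℂ) (ρ : Matrix (Fin n) (Fin n) ℂ) :
    (A ⊗ₖ Bᵀ) *ᵥ mvec ρ = mvec (A * ρ * B) := by
  funext p
  obtain ⟨i, j⟩ := p
  simp only [mulVec, dotProduct, Fintype.sum_prod_type, kroneckerMap_apply, mvec, mul_apply,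
    transpose_apply]
  rw [Finset.sum_comm]
  simp_rw [Finset.sum_mul]
  refine Finset.sum_congr rfl fun l _ => Finset.sum_congr rfl fun k _ => by ring

lemma kron_isHermitian {n : ℕ} {A B : Matrix (Fin n) (Fin n) ℂ}
    (hA : A.IsHermitian) (hB : B.IsHermitian) : (A ⊗ₖ B).IsHermitian := by
  ext ⟨i, j⟩ ⟨k, l⟩
  simp only [conjTranspose_apply, kroneckerMap_apply, star_mul']
  rw [mul_comm, hA.apply, hB.apply, mul_comm]

section core
variable {m : Type} [Fintype m] [DecidableEq m]

/-- For a PSD contraction `T`, `‖Tv‖² ≤ ‖v‖²`, with equality only at fixed points. -/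
lemma psd_contraction (T : Matrix m m ℂ) (hT : T.PosSemidef) (hT1 : (1 - T).PosSemidef)
    (v : m → ℂ) :
    star (T *ᵥ v) ⬝ᵥ (T *ᵥ v) ≤ star v ⬝ᵥ v ∧
      (star (T *ᵥ v) ⬝ᵥ (T *ᵥ v) = star v ⬝ᵥ v → T *ᵥ v = v) := by
  have hnorm : star (T *ᵥ v) ⬝ᵥ (T *ᵥ v) = star v ⬝ᵥ ((T * T) *ᵥ v) := by
    rw [star_mulVec, dotProduct_mulVec, vecMul_vecMul, hT.1, ← dotProduct_mulVec]
  have hsq : (T - T * T).PosSemidef := by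
    obtain ⟨S, hSH, hSS⟩ : ∃ S : Matrix m m ℂ, Sᴴ = S ∧ S * S = T :=
      ⟨hT.sqrt, hT.posSemidef_sqrt.1, hT.sqrt_mul_self⟩
    have h := hT1.conjTranspose_mul_mul_same S
    have heq : Sᴴ * (1 - T) * S = T - T * T := by
      rw [hSH, mul_sub, mul_one, sub_mul, hSS]
      congr 1
      rw [← hSS]
      simp [mul_assoc]
    rwa [heq] at h
  have h1 : star v ⬝ᵥ ((T * T) *ᵥ v) ≤ star v ⬝ᵥ (T *ᵥ v) := by
    have := hsq.dotProduct_mulVec_nonneg v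
    rw [sub_mulVec, dotProduct_sub, sub_nonneg] at this
    exact this
  have h2 : star v ⬝ᵥ (T *ᵥ v) ≤ star v ⬝ᵥ v := by
    have := hT1.dotProduct_mulVec_nonneg v
    rw [sub_mulVec, dotProduct_sub, one_mulVec, sub_nonneg] at this
    exact this
  refine ⟨by rw [hnorm]; exact le_trans h1 h2, fun heq => ?_⟩
  have h3 : star v ⬝ᵥ (T *ᵥ v) = star v ⬝ᵥ v := by
    refine le_antisymm h2 ?_
    calc star v ⬝ᵥ v = star v ⬝ᵥ ((T * T) *ᵥ v) := by rw [← hnorm, heq]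
    _ ≤ star v ⬝ᵥ (T *ᵥ v) := h1
  have h4 : star v ⬝ᵥ ((1 - T) *ᵥ v) = 0 := by
    rw [sub_mulVec, one_mulVec, dotProduct_sub, h3, sub_self]
  have h5 := psd_mulVec_eq_zero _ hT1 v h4
  rw [sub_mulVec, one_mulVec, sub_eq_zero] at h5
  exact h5.symm

lemma sum_mulVec' {k : ℕ} (f : Fin k → Matrix m m ℂ) (x : m → ℂ) :
    (∑ α, f α) *ᵥ x = ∑ α, f α *ᵥ x := by
  funext p
  simp only [mulVec, dotProduct, Matrix.sum_apply, Finset.sum_apply, Finset.sum_mul]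
  exact Finset.sum_comm

lemma posSemidef_sum {k : ℕ} (f : Fin k → Matrix m m ℂ) (hf : ∀ α, (f α).PosSemidef) :
    (∑ α, f α).PosSemidef := by
  constructor
  · unfold Matrix.IsHermitian
    rw [conjTranspose_sum]
    exact Finset.sum_congr rfl fun α _ => (hf α).1
  · exact (Matrix.posSemidef_sum Finset.univ fun α _ => hf α).2

end core

section chan
variable {n : ℕ}

lemma mvec_sum {k : ℕ} (M : Fin k → Matrix (Fin n) (Fin n) ℂ) :
    mvec (∑ α, M α) = ∑ α, mvec (M α) := by
  funext p
  simp [mvec, Matrix.sum_apply, Finset.sum_apply]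

lemma sum_kronecker_left {k : ℕ} (A : Fin k → Matrix (Fin n) (Fin n) ℂ)
    (B : Matrix (Fin n) (Fin n) ℂ) : (∑ α, A α) ⊗ₖ B = ∑ α, A α ⊗ₖ B := by
  ext ⟨i, j⟩ ⟨a, b⟩
  simp [kroneckerMap_apply, Matrix.sum_apply, Finset.sum_mul]

lemma sum_kronecker_right {k : ℕ} (A : Matrix (Fin n) (Fin n) ℂ)
    (B : Fin k → Matrix (Fin n) (Fin n) ℂ) : A ⊗ₖ (∑ α, B α) = ∑ α, A ⊗ₖ B α := by
  ext ⟨i, j⟩ ⟨a, b⟩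
  simp [kroneckerMap_apply, Matrix.sum_apply, Finset.mul_sum]

lemma bare_superop {Φ : Matrix (Fin n) (Fin n) ℂ → Matrix (Fin n) (Fin n) ℂ}
    (h : IsBareChannel Φ) :
    ∃ T : Matrix (Fin n × Fin n) (Fin n × Fin n) ℂ,
      T.PosSemidef ∧ (1 - T).PosSemidef ∧ ∀ ρ, mvec (Φ ρ) = T *ᵥ mvec ρ := by
  obtain ⟨k, E, hE, hsum, happly⟩ := h
  set K : Fin k → Matrix (Fin n) (Fin n) ℂ := fun α => (hE α).sqrt with hK
  have hKps : ∀ α, (K α).PosSemidef := fun α => (hE α).posSemidef_sqrt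
  have hKH : ∀ α, (K α).IsHermitian := fun α => (hKps α).1
  have hKK : ∀ α, K α * K α = E α := fun α => (hE α).sqrt_mul_self
  refine ⟨∑ α, K α ⊗ₖ (K α)ᵀ, ?_, ?_, ?_⟩
  · -- T is PSD
    refine _root_.posSemidef_sum _ fun α => ?_
    obtain ⟨S, hSH, hSS⟩ : ∃ S : Matrix (Fin n) (Fin n) ℂ, S.IsHermitian ∧ S * S = K α :=
      ⟨(hKps α).sqrt, (hKps α).posSemidef_sqrt.1, (hKps α).sqrt_mul_self⟩
    have hher : (S ⊗ₖ Sᵀ).IsHermitian := kron_isHermitian hSH hSH.transpose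
    have : K α ⊗ₖ (K α)ᵀ = (S ⊗ₖ Sᵀ)ᴴ * (S ⊗ₖ Sᵀ) := by
      rw [hher.eq, ← mul_kronecker_mul, hSS, ← transpose_mul, hSS]
    rw [this]
    exact posSemidef_conjTranspose_mul_self _
  · -- 1 - T is PSD
    set T := ∑ α, K α ⊗ₖ (K α)ᵀ with hT
    set D : Fin k → Matrix (Fin n × Fin n) (Fin n × Fin n) ℂ :=
      fun α => K α ⊗ₖ 1 - 1 ⊗ₖ (K α)ᵀ with hD
    have hDH : ∀ α, (D α).IsHermitian :=
      fun α => (kron_isHermitian (hKH α) isHermitian_one).sub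
        (kron_isHermitian isHermitian_one (hKH α).transpose)
    have hDD : ∀ α, (D α * D α).PosSemidef := by
      intro α
      have := posSemidef_conjTranspose_mul_self (D α)
      rwa [(hDH α).eq] at this
    have key : ∑ α, D α * D α = (1 - T) + (1 - T) := by
      have hterm : ∀ α, D α * D α =
          (E α ⊗ₖ 1 + 1 ⊗ₖ (E α)ᵀ) - (K α ⊗ₖ (K α)ᵀ + K α ⊗ₖ (K α)ᵀ) := by
        intro α
        rw [hD]
        simp only [sub_mul, mul_sub, ← mul_kronecker_mul, one_mul, mul_one,
          ← transpose_mul, hKK]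
        abel
      simp only [hterm]
      simp only [Finset.sum_sub_distrib, Finset.sum_add_distrib]
      rw [← sum_kronecker_left, ← sum_kronecker_right, ← transpose_sum, hsum, transpose_one,
        one_kronecker_one, ← hT]
      abel
    refine posSemidef_iff_dotProduct_mulVec.mpr ⟨?_, ?_⟩
    · exact isHermitian_one.sub (_root_.posSemidef_sum _ fun α => by
        obtain ⟨S, hSH, hSS⟩ : ∃ S : Matrix (Fin n) (Fin n) ℂ, S.IsHermitian ∧ S * S = K α :=
          ⟨(hKps α).sqrt, (hKps α).posSemidef_sqrt.1, (hKps α).sqrt_mul_self⟩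
        have hher : (S ⊗ₖ Sᵀ).IsHermitian := kron_isHermitian hSH hSH.transpose
        have : K α ⊗ₖ (K α)ᵀ = (S ⊗ₖ Sᵀ)ᴴ * (S ⊗ₖ Sᵀ) := by
          rw [hher.eq, ← mul_kronecker_mul, hSS, ← transpose_mul, hSS]
        rw [this]
        exact posSemidef_conjTranspose_mul_self _).1
    · intro x
      have hpos : 0 ≤ star x ⬝ᵥ ((1 - T) + (1 - T)) *ᵥ x := by
        rw [← key]
        exact (_root_.posSemidef_sum _ hDD).dotProduct_mulVec_nonneg x
      rw [add_mulVec, dotProduct_add] at hpos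
      rw [Complex.le_def] at hpos ⊢
      constructor
      · have := hpos.1
        simp only [Complex.zero_re, Complex.add_re] at this ⊢
        linarith
      · have := hpos.2
        simp only [Complex.zero_im, Complex.add_im] at this ⊢
        linarith
  · -- action
    intro ρ
    rw [happly, mvec_sum, sum_mulVec']
    exact Finset.sum_congr rfl fun α _ => (kron_mulVec (K α) (K α) ρ).symm

end chan

section fold
variable {n : ℕ}

def Good (f : Matrix (Fin n) (Fin n) ℂ → Matrix (Fin n) (Fin n) ℂ) : Prop :=
  ∀ ρ, (star (mvec (f ρ)) ⬝ᵥ mvec (f ρ) ≤ star (mvec ρ) ⬝ᵥ mvec ρ) ∧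
    (star (mvec (f ρ)) ⬝ᵥ mvec (f ρ) = star (mvec ρ) ⬝ᵥ mvec ρ → f ρ = ρ)

lemma good_of_bare {Φ : Matrix (Fin n) (Fin n) ℂ → Matrix (Fin n) (Fin n) ℂ}
    (h : IsBareChannel Φ) : Good Φ := by
  obtain ⟨T, hT, hT1, hvec⟩ := bare_superop h
  intro ρ
  have := psd_contraction T hT hT1 (mvec ρ)
  rw [← hvec ρ] at this
  exact ⟨this.1, fun he => mvec_inj (this.2 he)⟩

lemma foldl_shift (L : List (Matrix (Fin n) (Fin n) ℂ → Matrix (Fin n) (Fin n) ℂ))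
    (f₀ : Matrix (Fin n) (Fin n) ℂ → Matrix (Fin n) (Fin n) ℂ) : ∀ ρ : Matrix (Fin n) (Fin n) ℂ,
    (L.foldl (fun f g => g ∘ f) f₀) ρ = (L.foldl (fun f g => g ∘ f) id) (f₀ ρ) := by
  induction L generalizing f₀ with
  | nil => intro ρ; rfl
  | cons g L ih =>
      intro ρ
      simp only [List.foldl_cons]
      rw [ih (g ∘ f₀) ρ, ih (g ∘ id) (f₀ ρ)]
      rfl

lemma good_foldl (L : List (Matrix (Fin n) (Fin n) ℂ → Matrix (Fin n) (Fin n) ℂ))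
    (hL : ∀ f ∈ L, Good f) : Good (L.foldl (fun f g => g ∘ f) id) := by
  induction L with
  | nil => exact fun ρ => ⟨le_refl _, fun _ => rfl⟩
  | cons g L ih =>
      have hg : Good g := hL g (List.mem_cons_self)
      have hrest : Good (L.foldl (fun f g => g ∘ f) id) :=
        ih fun f hf => hL f (List.mem_cons_of_mem g hf)
      intro ρ
      have hrw : (List.foldl (fun f g => g ∘ f) id (g :: L)) ρ
          = (L.foldl (fun f g => g ∘ f) id) (g ρ) := by
        simp only [List.foldl_cons]
        rw [foldl_shift]
        rfl
      constructor
      · rw [hrw]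
        exact le_trans ((hrest (g ρ)).1) ((hg ρ).1)
      · intro he
        rw [hrw] at he ⊢
        have h1 : star (mvec (g ρ)) ⬝ᵥ mvec (g ρ) = star (mvec ρ) ⬝ᵥ mvec ρ :=
          le_antisymm ((hg ρ).1) (he ▸ (hrest (g ρ)).1)
        have h2 : g ρ = ρ := (hg ρ).2 h1
        rw [h2] at he ⊢
        exact (hrest ρ).2 he

end fold

theorem stmt_6 (n N : ℕ)
    (Φs : Fin N → (Matrix (Fin n) (Fin n) ℂ → Matrix (Fin n) (Fin n) ℂ))
    (hbare : ∀ i, IsBareChannel (Φs i))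
    (Φ : Matrix (Fin n) (Fin n) ℂ → Matrix (Fin n) (Fin n) ℂ)
    (hΦ : Φ = (List.ofFn Φs).foldl (fun f g => g ∘ f) id)
    (ρ : Matrix (Fin n) (Fin n) ℂ) (hρ : ρ ≠ 0)
    (lam : ℂ) (hlam : ‖lam‖ = 1)
    (heig : Φ ρ = lam • ρ) :
    lam = 1 := by
  have hgood : Good Φ := by
    rw [hΦ]
    refine good_foldl _ fun f hf => ?_
    obtain ⟨i, rfl⟩ := Set.mem_range.mp ((List.mem_ofFn' _ _).mp hf)
    exact good_of_bare (hbare i)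
  have hmul : (starRingEnd ℂ) lam * lam = 1 := by
    rw [mul_comm, Complex.mul_conj, ← Complex.sq_norm, hlam]
    norm_num
  have hnorm : star (mvec (Φ ρ)) ⬝ᵥ mvec (Φ ρ) = star (mvec ρ) ⬝ᵥ mvec ρ := by
    rw [heig, mvec_smul, star_smul, smul_dotProduct, dotProduct_smul, smul_smul,
      Complex.star_def, hmul, one_smul]
  have hfix : Φ ρ = ρ := (hgood ρ).2 hnorm
  rw [heig] at hfix
  by_contra hne
  apply hρ
  have : (lam - 1) • ρ = 0 := by rw [sub_smul, one_smul, hfix, sub_self]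
  rcases smul_eq_zero.mp this with h | h
  · exact absurd (sub_eq_zero.mp h) hne
  · exact h
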